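/- Every lattice polygon Δ ⊂ ℝ² (the convex hull of finitely many points of ℤ², of dimension 2) which has no interior lattice point and no lattice point in the relative interior of any of its edges is equivalent, under the action of GL₂(ℤ) combined with lattice translations, either to the unit triangle conv{(0,0),(1,0),(0,1)} or to the unit square conv{(0,0),(1,0),(0,1),(1,1)}. -/

import Mathlib

/-!
STATEMENT 4: Every two-dimensional lattice polygon with no interior lattice point and
no lattice point in the relative interior of any of its edges is unimodular equivalent
(i.e. equivalent under `GL₂(ℤ)` combined with lattice translations) to the unit triangle
`conv{(0,0),(1,0),(0,1)}` or to the unit square `conv{(0,0),(1,0),(0,1),(1,1)}`.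

A lattice polygon is encoded as the convex hull (in `ℝ²`) of a finite subset of `ℤ²`
that is not contained in a line.  Since all vertices of a lattice polygon are lattice
points, the condition "no lattice point lies in the relative interior of an edge" is
expressed as: every lattice point on the topological boundary of the polygon is an
extreme point.
-/

/-- The embedding `ℤ² ↪ ℝ²`. -/
def toR2 (p : ℤ × ℤ) : ℝ × ℝ := ((p.1 : ℝ), (p.2 : ℝ))

/-- The lattice polygon spanned by a finite set of lattice points. -/
def latticeHull (S : Finset (ℤ × ℤ)) : Set (ℝ × ℝ) := convexHull ℝ (toR2 '' ↑S)

/-- The affine map `p ↦ A p + b` on the lattice `ℤ²` given by an integer matrix `A`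
and a translation vector `b`. -/
def affineLatticeMap (A : Matrix (Fin 2) (Fin 2) ℤ) (b : ℤ × ℤ) (p : ℤ × ℤ) : ℤ × ℤ :=
  (A 0 0 * p.1 + A 0 1 * p.2 + b.1, A 1 0 * p.1 + A 1 1 * p.2 + b.2)

set_option maxHeartbeats 1000000


lemma toR2_inj : Function.Injective toR2 := by
  intro a b h
  simp only [toR2, Prod.ext_iff] at h ⊢
  exact ⟨by exact_mod_cast h.1, by exact_mod_cast h.2⟩


lemma mem_hull3 {x y z : ℝ × ℝ} {a b c : ℝ} (ha : 0 ≤ a) (hb : 0 ≤ b) (hc : 0 ≤ c)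
    (habc : a + b + c = 1) :
    a • x + b • y + c • z ∈ convexHull ℝ ({x, y, z} : Set (ℝ × ℝ)) := by
  have hz : ∀ i ∈ (Finset.univ : Finset (Fin 3)),
      (![x, y, z]) i ∈ ({x, y, z} : Set (ℝ × ℝ)) := by
    intro i _; fin_cases i <;> simp
  have h := Finset.centerMass_mem_convexHull (Finset.univ : Finset (Fin 3))
    (w := ![a, b, c]) (by intro i _; fin_cases i <;> simpa)
    (by simp [Fin.sum_univ_three, habc]) hz
  rw [Finset.centerMass] at h
  simpa [Fin.sum_univ_three, habc] using h


lemma exists_lattice_of_two_le_det (p q r : ℤ × ℤ)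
    (hd : 2 ≤ (q.1 - p.1) * (r.2 - p.2) - (q.2 - p.2) * (r.1 - p.1)) :
    ∃ w : ℤ × ℤ, w ≠ p ∧ w ≠ q ∧ w ≠ r ∧
      toR2 w ∈ convexHull ℝ ({toR2 p, toR2 q, toR2 r} : Set (ℝ × ℝ)) := by
  set u1 : ℤ := q.1 - p.1 with hu1
  set u2 : ℤ := q.2 - p.2 with hu2
  set v1 : ℤ := r.1 - p.1 with hv1
  set v2 : ℤ := r.2 - p.2 with hv2
  set d : ℤ := u1 * v2 - u2 * v1 with hdd
  have hd0 : 0 < d := by omega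
  have hdne : d ≠ 0 := by omega
  -- a helper for linear dependence
  have coeffs : ∀ A B : ℤ, A * u1 + B * v1 = 0 → A * u2 + B * v2 = 0 → A = 0 ∧ B = 0 := by
    intro A B h1 h2
    have hA : A * d = 0 := by rw [hdd]; linear_combination v2 * h1 - v1 * h2
    have hB : B * d = 0 := by rw [hdd]; linear_combination u1 * h2 - u2 * h1
    exact ⟨(mul_eq_zero.mp hA).resolve_right hdne, (mul_eq_zero.mp hB).resolve_right hdne⟩
  -- find a non-representable vector w₀
  have key : ¬ ((∃ m n : ℤ, 1 = m * u1 + n * v1 ∧ 0 = m * u2 + n * v2) ∧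
      (∃ m n : ℤ, 0 = m * u1 + n * v1 ∧ 1 = m * u2 + n * v2)) := by
    rintro ⟨⟨m, n, h1, h2⟩, ⟨m', n', h3, h4⟩⟩
    have h14 : (1 : ℤ) * 1 = (m * u1 + n * v1) * (m' * u2 + n' * v2) := by rw [← h1, ← h4]
    have h23 : (0 : ℤ) * 0 = (m * u2 + n * v2) * (m' * u1 + n' * v1) := by rw [← h2, ← h3]
    have hdvd : (m * n' - n * m') * d = 1 := by
      rw [hdd]; linear_combination h23 - h14
    have : d ∣ 1 := Dvd.intro_left _ hdvd
    have := Int.le_of_dvd one_pos this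
    omega
  have hw0 : ∃ w₀ : ℤ × ℤ, ¬ ∃ m n : ℤ, w₀.1 = m * u1 + n * v1 ∧ w₀.2 = m * u2 + n * v2 := by
    by_contra hcon
    push_neg at hcon
    exact key ⟨hcon (1, 0), hcon (0, 1)⟩
  obtain ⟨⟨w01, w02⟩, hw₀⟩ := hw0
  simp only at hw₀
  set a : ℤ := w01 * v2 - w02 * v1 with ha
  set b : ℤ := u1 * w02 - u2 * w01 with hb
  have hc1 : d * w01 = a * u1 + b * v1 := by rw [hdd, ha, hb]; ring
  have hc2 : d * w02 = a * u2 + b * v2 := by rw [hdd, ha, hb]; ring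
  set a' : ℤ := a % d with ha'
  set b' : ℤ := b % d with hb'
  have ha'0 : 0 ≤ a' := Int.emod_nonneg a hdne
  have hb'0 : 0 ≤ b' := Int.emod_nonneg b hdne
  have ha'd : a' < d := Int.emod_lt_of_pos a hd0
  have hb'd : b' < d := Int.emod_lt_of_pos b hd0
  have hmoda : d * (a / d) + a % d = a := Int.mul_ediv_add_emod a d
  have hmodb : d * (b / d) + b % d = b := Int.mul_ediv_add_emod b d
  set w1 : ℤ := w01 - (a / d) * u1 - (b / d) * v1 with hw1def
  set w2 : ℤ := w02 - (a / d) * u2 - (b / d) * v2 with hw2def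
  have hw1 : d * w1 = a' * u1 + b' * v1 := by
    rw [hw1def, ha', hb']; linear_combination hc1 - u1 * hmoda - v1 * hmodb
  have hw2 : d * w2 = a' * u2 + b' * v2 := by
    rw [hw2def, ha', hb']; linear_combination hc2 - u2 * hmoda - v2 * hmodb
  have hab0 : ¬ (a' = 0 ∧ b' = 0) := by
    rintro ⟨hA, hB⟩
    apply hw₀
    refine ⟨a / d, b / d, ?_, ?_⟩
    · have h0 : d * w1 = 0 := by rw [hw1, hA, hB]; ring
      have hz : w1 = 0 := (mul_eq_zero.mp h0).resolve_left hdne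
      rw [hw1def] at hz; linarith
    · have h0 : d * w2 = 0 := by rw [hw2, hA, hB]; ring
      have hz : w2 = 0 := (mul_eq_zero.mp h0).resolve_left hdne
      rw [hw2def] at hz; linarith
  -- real-number facts
  have hdR : (0:ℝ) < (d:ℝ) := by exact_mod_cast hd0
  have hdRne : (d:ℝ) ≠ 0 := ne_of_gt hdR
  -- two cases
  by_cases hcase : a' + b' ≤ d
  · -- z = p + w'
    refine ⟨(p.1 + w1, p.2 + w2), ?_, ?_, ?_, ?_⟩
    · -- ≠ p
      intro h
      rw [Prod.ext_iff] at h
      simp only at h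
      have hz1 : w1 = 0 := by omega
      have hz2 : w2 = 0 := by omega
      have e1 : a' * u1 + b' * v1 = 0 := by rw [← hw1, hz1]; ring
      have e2 : a' * u2 + b' * v2 = 0 := by rw [← hw2, hz2]; ring
      obtain ⟨hA, hB⟩ := coeffs a' b' e1 e2
      exact hab0 ⟨hA, hB⟩
    · -- ≠ q
      intro h
      rw [Prod.ext_iff] at h
      simp only at h
      have e1 : (a' - d) * u1 + b' * v1 = 0 := by
        have : w1 = u1 := by omega
        rw [this] at hw1; linarith [hw1]
      have e2 : (a' - d) * u2 + b' * v2 = 0 := by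
        have : w2 = u2 := by omega
        rw [this] at hw2; linarith [hw2]
      obtain ⟨hA, hB⟩ := coeffs _ _ e1 e2
      omega
    · -- ≠ r
      intro h
      rw [Prod.ext_iff] at h
      simp only at h
      have e1 : a' * u1 + (b' - d) * v1 = 0 := by
        have : w1 = v1 := by omega
        rw [this] at hw1; linarith [hw1]
      have e2 : a' * u2 + (b' - d) * v2 = 0 := by
        have : w2 = v2 := by omega
        rw [this] at hw2; linarith [hw2]
      obtain ⟨hA, hB⟩ := coeffs _ _ e1 e2
      omega
    · -- membership
      have hre : toR2 (p.1 + w1, p.2 + w2) =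
          (((d - a' - b' : ℤ) : ℝ) / d) • toR2 p + ((a' : ℝ) / d) • toR2 q
            + ((b' : ℝ) / d) • toR2 r := by
        have i1 : d * (p.1 + w1) = (d - a' - b') * p.1 + a' * q.1 + b' * r.1 := by
          rw [hu1, hv1] at hw1; linarith [hw1]
        have i2 : d * (p.2 + w2) = (d - a' - b') * p.2 + a' * q.2 + b' * r.2 := by
          rw [hu2, hv2] at hw2; linarith [hw2]
        have r1 : ((d : ℝ)) * (p.1 + w1 : ℤ) = ((d - a' - b' : ℤ) : ℝ) * p.1 + (a' : ℝ) * q.1 + (b' : ℝ) * r.1 := by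
          exact_mod_cast congrArg (fun t : ℤ => (t : ℝ)) i1
        have r2 : ((d : ℝ)) * (p.2 + w2 : ℤ) = ((d - a' - b' : ℤ) : ℝ) * p.2 + (a' : ℝ) * q.2 + (b' : ℝ) * r.2 := by
          exact_mod_cast congrArg (fun t : ℤ => (t : ℝ)) i2
        simp only [toR2, Prod.ext_iff, Prod.smul_fst, Prod.smul_snd, Prod.fst_add, Prod.snd_add,
          smul_eq_mul]
        push_cast at r1 r2
        constructor
        · field_simp
          push_cast; linarith [r1]
        · field_simp
          push_cast; linarith [r2]
      rw [hre]
      have ccase : ((a' : ℝ)) + (b' : ℝ) ≤ (d : ℝ) := by exact_mod_cast hcase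
      apply mem_hull3
      · apply div_nonneg _ (le_of_lt hdR); push_cast; linarith
      · exact div_nonneg (by exact_mod_cast ha'0) (le_of_lt hdR)
      · exact div_nonneg (by exact_mod_cast hb'0) (le_of_lt hdR)
      · push_cast
        field_simp
        try ring

  · -- z = p + u + v - w'
    push_neg at hcase
    refine ⟨(p.1 + u1 + v1 - w1, p.2 + u2 + v2 - w2), ?_, ?_, ?_, ?_⟩
    · intro h
      rw [Prod.ext_iff] at h
      simp only at h
      have e1 : (d - a') * u1 + (d - b') * v1 = 0 := by
        have : w1 = u1 + v1 := by omega
        rw [this] at hw1; linarith [hw1]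
      have e2 : (d - a') * u2 + (d - b') * v2 = 0 := by
        have : w2 = u2 + v2 := by omega
        rw [this] at hw2; linarith [hw2]
      obtain ⟨hA, hB⟩ := coeffs _ _ e1 e2
      omega
    · intro h
      rw [Prod.ext_iff] at h
      simp only at h
      have e1 : a' * u1 + (b' - d) * v1 = 0 := by
        have : w1 = v1 := by omega
        rw [this] at hw1; linarith [hw1]
      have e2 : a' * u2 + (b' - d) * v2 = 0 := by
        have : w2 = v2 := by omega
        rw [this] at hw2; linarith [hw2]
      obtain ⟨hA, hB⟩ := coeffs _ _ e1 e2
      omega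
    · intro h
      rw [Prod.ext_iff] at h
      simp only at h
      have e1 : (a' - d) * u1 + b' * v1 = 0 := by
        have : w1 = u1 := by omega
        rw [this] at hw1; linarith [hw1]
      have e2 : (a' - d) * u2 + b' * v2 = 0 := by
        have : w2 = u2 := by omega
        rw [this] at hw2; linarith [hw2]
      obtain ⟨hA, hB⟩ := coeffs _ _ e1 e2
      omega
    · have hre : toR2 (p.1 + u1 + v1 - w1, p.2 + u2 + v2 - w2) =
          (((a' + b' - d : ℤ) : ℝ) / d) • toR2 p + (((d - a' : ℤ) : ℝ) / d) • toR2 q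
            + (((d - b' : ℤ) : ℝ) / d) • toR2 r := by
        have i1 : d * (p.1 + u1 + v1 - w1) = (a' + b' - d) * p.1 + (d - a') * q.1 + (d - b') * r.1 := by
          rw [hu1, hv1] at hw1 ⊢; linarith [hw1]
        have i2 : d * (p.2 + u2 + v2 - w2) = (a' + b' - d) * p.2 + (d - a') * q.2 + (d - b') * r.2 := by
          rw [hu2, hv2] at hw2 ⊢; linarith [hw2]
        have r1 : ((d : ℝ)) * ((p.1 + u1 + v1 - w1 : ℤ) : ℝ) = ((a' + b' - d : ℤ) : ℝ) * p.1 + ((d - a' : ℤ) : ℝ) * q.1 + ((d - b' : ℤ) : ℝ) * r.1 := by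
          exact_mod_cast congrArg (fun t : ℤ => (t : ℝ)) i1
        have r2 : ((d : ℝ)) * ((p.2 + u2 + v2 - w2 : ℤ) : ℝ) = ((a' + b' - d : ℤ) : ℝ) * p.2 + ((d - a' : ℤ) : ℝ) * q.2 + ((d - b' : ℤ) : ℝ) * r.2 := by
          exact_mod_cast congrArg (fun t : ℤ => (t : ℝ)) i2
        simp only [toR2, Prod.ext_iff, Prod.smul_fst, Prod.smul_snd, Prod.fst_add, Prod.snd_add,
          smul_eq_mul]
        push_cast at r1 r2
        constructor
        · field_simp
          push_cast; linarith [r1]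
        · field_simp
          push_cast; linarith [r2]
      rw [hre]
      have ccase : ((d : ℝ)) < (a' : ℝ) + (b' : ℝ) := by exact_mod_cast hcase
      have cad : ((a' : ℝ)) < (d : ℝ) := by exact_mod_cast ha'd
      have cbd : ((b' : ℝ)) < (d : ℝ) := by exact_mod_cast hb'd
      apply mem_hull3
      · apply div_nonneg _ (le_of_lt hdR); push_cast; linarith
      · apply div_nonneg _ (le_of_lt hdR); push_cast; linarith
      · apply div_nonneg _ (le_of_lt hdR); push_cast; linarith
      · push_cast
        field_simp
        try ring


lemma det_pm_one (p q r : ℤ × ℤ)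
    (hne : (q.1 - p.1) * (r.2 - p.2) - (q.2 - p.2) * (r.1 - p.1) ≠ 0)
    (hempty : ∀ w : ℤ × ℤ,
      toR2 w ∈ convexHull ℝ ({toR2 p, toR2 q, toR2 r} : Set (ℝ × ℝ)) →
      w = p ∨ w = q ∨ w = r) :
    (q.1 - p.1) * (r.2 - p.2) - (q.2 - p.2) * (r.1 - p.1) = 1 ∨
    (q.1 - p.1) * (r.2 - p.2) - (q.2 - p.2) * (r.1 - p.1) = -1 := by
  by_contra hcon
  push_neg at hcon
  obtain ⟨h1, h2⟩ := hcon
  have hopp : (r.1 - p.1) * (q.2 - p.2) - (r.2 - p.2) * (q.1 - p.1) =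
      -((q.1 - p.1) * (r.2 - p.2) - (q.2 - p.2) * (r.1 - p.1)) := by ring
  rcases (by omega : 2 ≤ (q.1 - p.1) * (r.2 - p.2) - (q.2 - p.2) * (r.1 - p.1) ∨
      2 ≤ (r.1 - p.1) * (q.2 - p.2) - (r.2 - p.2) * (q.1 - p.1)) with hpos | hneg
  · obtain ⟨w, hwp, hwq, hwr, hmem⟩ := exists_lattice_of_two_le_det p q r hpos
    rcases hempty w hmem with h | h | h <;> [exact hwp h; exact hwq h; exact hwr h]
  · obtain ⟨w, hwp, hwr, hwq, hmem⟩ := exists_lattice_of_two_le_det p r q hneg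
    have hset : ({toR2 p, toR2 r, toR2 q} : Set (ℝ × ℝ)) = {toR2 p, toR2 q, toR2 r} := by
      ext t; simp; tauto
    rw [hset] at hmem
    rcases hempty w hmem with h | h | h <;> [exact hwp h; exact hwq h; exact hwr h]

lemma collinear_middle (x y z : ℤ × ℤ) (hxy : x ≠ y) (hxz : x ≠ z) (hyz : y ≠ z)
    (hdet : (y.1 - x.1) * (z.2 - x.2) - (y.2 - x.2) * (z.1 - x.1) = 0) :
    toR2 x ∈ openSegment ℝ (toR2 y) (toR2 z) ∨
    toR2 y ∈ openSegment ℝ (toR2 x) (toR2 z) ∨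
    toR2 z ∈ openSegment ℝ (toR2 x) (toR2 y) := by
  have hdetR : ((y.1:ℝ) - x.1) * ((z.2:ℝ) - x.2) - ((y.2:ℝ) - x.2) * ((z.1:ℝ) - x.1) = 0 := by
    exact_mod_cast congrArg (fun t : ℤ => (t : ℝ)) hdet
  have hc : ∃ c : ℝ, ((z.1:ℝ) - x.1) = c * ((y.1:ℝ) - x.1) ∧
      ((z.2:ℝ) - x.2) = c * ((y.2:ℝ) - x.2) := by
    by_cases h1 : y.1 - x.1 = 0
    · have h1R : (y.1:ℝ) - x.1 = 0 := by
        have h : y.1 = x.1 := by omega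
        rw [h]; ring
      have h2 : y.2 - x.2 ≠ 0 := by
        intro h
        exact hxy (Prod.ext (by omega) (by omega))
      have h2R : (y.2:ℝ) - x.2 ≠ 0 := by
        intro h
        apply h2
        have : (y.2:ℝ) = (x.2:ℝ) := by linarith
        exact_mod_cast sub_eq_zero.mpr this
      refine ⟨((z.2:ℝ) - x.2) / ((y.2:ℝ) - x.2), ?_, ?_⟩
      · rw [h1R, mul_zero]
        have : ((y.2:ℝ) - x.2) * ((z.1:ℝ) - x.1) = 0 := by
          linear_combination ((z.2:ℝ) - x.2) * h1R - hdetR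
        rcases mul_eq_zero.mp this with h | h
        · exact absurd h h2R
        · exact h
      · field_simp
    · have h1R : (y.1:ℝ) - x.1 ≠ 0 := by
        intro h
        apply h1
        have : (y.1:ℝ) = (x.1:ℝ) := by linarith
        exact_mod_cast sub_eq_zero.mpr this
      refine ⟨((z.1:ℝ) - x.1) / ((y.1:ℝ) - x.1), ?_, ?_⟩
      · field_simp
      · field_simp
        linarith [hdetR]
  obtain ⟨c, hc1, hc2⟩ := hc
  have hc0 : c ≠ 0 := by
    intro h
    rw [h, zero_mul] at hc1 hc2
    exact hxz (Prod.ext (by exact_mod_cast (by linarith : (x.1:ℝ) = z.1))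
      (by exact_mod_cast (by linarith : (x.2:ℝ) = z.2)))
  have hcne1 : c ≠ 1 := by
    intro h
    rw [h, one_mul] at hc1 hc2
    exact hyz (Prod.ext (by exact_mod_cast (by linarith : (y.1:ℝ) = z.1))
      (by exact_mod_cast (by linarith : (y.2:ℝ) = z.2)))
  rcases lt_trichotomy c 0 with hneg | hzero | hpos
  · -- x is in the middle: x ∈ openSegment y z
    left
    rw [openSegment_eq_image']
    refine ⟨1 / (1 - c), ⟨div_pos one_pos (by linarith), ?_⟩, ?_⟩
    · rw [div_lt_one (by linarith)]; linarith
    · have h1c : (1:ℝ) - c ≠ 0 := by intro h; exact hc0 (by linarith)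
      simp only [toR2, Prod.ext_iff, Prod.smul_fst, Prod.smul_snd, Prod.fst_add, Prod.snd_add,
        Prod.fst_sub, Prod.snd_sub, smul_eq_mul]
      constructor
      · field_simp; linarith [hc1]
      · field_simp; linarith [hc2]
  · exact absurd hzero hc0
  · rcases lt_trichotomy c 1 with hlt | heq | hgt
    · -- z ∈ openSegment x y
      right; right
      rw [openSegment_eq_image']
      refine ⟨c, ⟨hpos, hlt⟩, ?_⟩
      simp only [toR2, Prod.ext_iff, Prod.smul_fst, Prod.smul_snd, Prod.fst_add, Prod.snd_add,
        Prod.fst_sub, Prod.snd_sub, smul_eq_mul]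
      constructor
      · linarith [hc1]
      · linarith [hc2]
    · exact absurd heq hcne1
    · -- y ∈ openSegment x z
      right; left
      rw [openSegment_eq_image']
      refine ⟨1 / c, ⟨by positivity, by rw [div_lt_one (by linarith)]; linarith⟩, ?_⟩
      simp only [toR2, Prod.ext_iff, Prod.smul_fst, Prod.smul_snd, Prod.fst_add, Prod.snd_add,
        Prod.fst_sub, Prod.snd_sub, smul_eq_mul]
      constructor
      · field_simp; linarith [hc1]
      · field_simp; linarith [hc2]


lemma affine_comp (B A : Matrix (Fin 2) (Fin 2) ℤ) (c b : ℤ × ℤ) (x : ℤ × ℤ) :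
    affineLatticeMap B c (affineLatticeMap A b x) =
      affineLatticeMap (B * A) (affineLatticeMap B c b) x := by
  simp only [affineLatticeMap, Matrix.mul_apply, Fin.sum_univ_two, Prod.ext_iff]
  constructor <;> ring

lemma map_triangle (p q r : ℤ × ℤ) (e : ℤ)
    (hedef : e = (r.1 - q.1) * (p.2 - q.2) - (r.2 - q.2) * (p.1 - q.1))
    (he : e = 1 ∨ e = -1) :
    ∃ (A : Matrix (Fin 2) (Fin 2) ℤ) (b : ℤ × ℤ), A.det = e ∧
      affineLatticeMap A b q = (0, 0) ∧
      affineLatticeMap A b r = (1, 0) ∧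
      affineLatticeMap A b p = (0, 1) ∧
      ∀ s : ℤ × ℤ, affineLatticeMap A b s =
        (e * ((s.1 - q.1) * (p.2 - q.2) - (s.2 - q.2) * (p.1 - q.1)),
         e * ((s.2 - q.2) * (r.1 - q.1) - (s.1 - q.1) * (r.2 - q.2))) := by
  have he2 : e * e = 1 := by rcases he with h | h <;> rw [h] <;> norm_num
  set M : Matrix (Fin 2) (Fin 2) ℤ :=
    !![e * (p.2 - q.2), -(e * (p.1 - q.1)); -(e * (r.2 - q.2)), e * (r.1 - q.1)] with hM
  have h00 : M 0 0 = e * (p.2 - q.2) := by rw [hM]; simp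
  have h01 : M 0 1 = -(e * (p.1 - q.1)) := by rw [hM]; simp
  have h10 : M 1 0 = -(e * (r.2 - q.2)) := by rw [hM]; simp
  have h11 : M 1 1 = e * (r.1 - q.1) := by rw [hM]; simp
  refine ⟨M,
    (-(e * (p.2 - q.2) * q.1 + (-(e * (p.1 - q.1))) * q.2),
     -((-(e * (r.2 - q.2))) * q.1 + e * (r.1 - q.1) * q.2)), ?_, ?_, ?_, ?_, ?_⟩
  · rw [hM, Matrix.det_fin_two_of]
    linear_combination ((p.2 - q.2) * (r.1 - q.1) - (p.1 - q.1) * (r.2 - q.2)) * he2 - hedef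
  · simp only [affineLatticeMap, h00, h01, h10, h11, Prod.ext_iff]
    constructor <;> ring
  · simp only [affineLatticeMap, h00, h01, h10, h11, Prod.ext_iff]
    constructor
    · linear_combination he2 - e * hedef
    · ring
  · simp only [affineLatticeMap, h00, h01, h10, h11, Prod.ext_iff]
    constructor
    · ring
    · linear_combination he2 - e * hedef
  · intro s
    simp only [affineLatticeMap, h00, h01, h10, h11, Prod.ext_iff]
    constructor <;> ring


lemma fourth_not_mem {x a b c : ℝ × ℝ}
    (hx : x ∈ (convexHull ℝ ({x, a, b, c} : Set (ℝ × ℝ))).extremePoints ℝ)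
    (hxa : x ≠ a) (hxb : x ≠ b) (hxc : x ≠ c) :
    x ∉ convexHull ℝ ({a, b, c} : Set (ℝ × ℝ)) := by
  intro hmem
  have habs : convexHull ℝ ({x, a, b, c} : Set (ℝ × ℝ)) =
      convexHull ℝ ({a, b, c} : Set (ℝ × ℝ)) := by
    apply Set.Subset.antisymm
    · apply convexHull_min _ (convex_convexHull ℝ _)
      intro t ht
      simp only [Set.mem_insert_iff, Set.mem_singleton_iff] at ht
      rcases ht with rfl | rfl | rfl | rfl
      · exact hmem
      · exact subset_convexHull ℝ _ (by simp)
      · exact subset_convexHull ℝ _ (by simp)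
      · exact subset_convexHull ℝ _ (by simp)
    · exact convexHull_mono (by intro t ht; simp only [Set.mem_insert_iff,
        Set.mem_singleton_iff] at ht ⊢; tauto)
  rw [habs] at hx
  have := extremePoints_convexHull_subset hx
  simp only [Set.mem_insert_iff, Set.mem_singleton_iff] at this
  rcases this with h | h | h
  · exact hxa h
  · exact hxb h
  · exact hxc h

theorem lattice_polygon_no_interior_classification
    (S : Finset (ℤ × ℤ))
    -- the polygon is two-dimensional:
    (hdim : ¬ Collinear ℝ (toR2 '' ↑S))
    -- no interior lattice point:
    (hnoint : ∀ p : ℤ × ℤ, toR2 p ∉ interior (latticeHull S))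
    -- no lattice point in the relative interior of an edge:
    (hbdry : ∀ p : ℤ × ℤ, toR2 p ∈ frontier (latticeHull S) →
      toR2 p ∈ Set.extremePoints ℝ (latticeHull S)) :
    ∃ (A : Matrix (Fin 2) (Fin 2) ℤ) (b : ℤ × ℤ), IsUnit A.det ∧
      (latticeHull (S.image (affineLatticeMap A b)) =
          latticeHull {(0, 0), (1, 0), (0, 1)} ∨
        latticeHull (S.image (affineLatticeMap A b)) =
          latticeHull {(0, 0), (1, 0), (0, 1), (1, 1)}) := by
  classical
  have hclosed : IsClosed (latticeHull S) := (S.finite_toSet.image toR2).isClosed_convexHull ℝ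
  have hext : ∀ w : ℤ × ℤ, toR2 w ∈ latticeHull S →
      toR2 w ∈ (latticeHull S).extremePoints ℝ := by
    intro w hw
    by_cases hi : toR2 w ∈ interior (latticeHull S)
    · exact absurd hi (hnoint w)
    · exact hbdry w (by rw [hclosed.frontier_eq]; exact ⟨hw, hi⟩)
  have hlat : ∀ w : ℤ × ℤ, toR2 w ∈ latticeHull S → w ∈ S := by
    intro w hw
    have h1 := extremePoints_convexHull_subset (hext w hw)
    obtain ⟨x, hxS, hx⟩ := h1
    rwa [← toR2_inj hx]
  have hmemhull : ∀ x ∈ S, toR2 x ∈ latticeHull S := by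
    intro x hx
    exact subset_convexHull ℝ _ ⟨x, hx, rfl⟩
  -- mod 2 injectivity
  have hinj : Set.InjOn (fun x : ℤ × ℤ => ((x.1 : ZMod 2), (x.2 : ZMod 2))) ↑S := by
    intro x hx y hy hxy
    by_contra hne
    simp only [Prod.ext_iff] at hxy
    obtain ⟨h1, h2⟩ := hxy
    have d1 : (2 : ℤ) ∣ y.1 - x.1 := by
      have : ((y.1 - x.1 : ℤ) : ZMod 2) = 0 := by push_cast; rw [← h1]; ring
      exact_mod_cast (ZMod.intCast_zmod_eq_zero_iff_dvd (y.1 - x.1) 2).mp this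
    have d2 : (2 : ℤ) ∣ y.2 - x.2 := by
      have : ((y.2 - x.2 : ℤ) : ZMod 2) = 0 := by push_cast; rw [← h2]; ring
      exact_mod_cast (ZMod.intCast_zmod_eq_zero_iff_dvd (y.2 - x.2) 2).mp this
    obtain ⟨k1, hk1⟩ := d1
    obtain ⟨k2, hk2⟩ := d2
    have hxK := hmemhull x hx
    have hyK := hmemhull y hy
    have hm_mid : toR2 (x.1 + k1, x.2 + k2) =
        (1/2 : ℝ) • toR2 x + (1/2 : ℝ) • toR2 y := by
      have c1 : (2 : ℝ) * (k1 : ℝ) = (y.1 : ℝ) - (x.1 : ℝ) := by exact_mod_cast hk1.symm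
      have c2 : (2 : ℝ) * (k2 : ℝ) = (y.2 : ℝ) - (x.2 : ℝ) := by exact_mod_cast hk2.symm
      simp only [toR2, Prod.ext_iff, Prod.smul_fst, Prod.smul_snd, Prod.fst_add, Prod.snd_add,
        smul_eq_mul]
      constructor
      · push_cast; linarith
      · push_cast; linarith
    have hmK : toR2 (x.1 + k1, x.2 + k2) ∈ latticeHull S := by
      rw [hm_mid]
      exact (convex_convexHull ℝ _) hxK hyK (by norm_num) (by norm_num) (by norm_num)
    have hopen : toR2 (x.1 + k1, x.2 + k2) ∈ openSegment ℝ (toR2 x) (toR2 y) :=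
      ⟨1/2, 1/2, by norm_num, by norm_num, by norm_num, hm_mid.symm⟩
    obtain ⟨e1, e2⟩ := (mem_extremePoints.mp (hext _ hmK)).2 (toR2 x) hxK (toR2 y) hyK hopen
    exact hne (toR2_inj (e1.trans e2.symm))
  have hcard4 : S.card ≤ 4 := by
    have := Finset.card_le_card_of_injOn (fun x : ℤ × ℤ => ((x.1 : ZMod 2), (x.2 : ZMod 2)))
      (fun x _ => Finset.mem_univ _) hinj
    simpa using this
  have hcard3 : 3 ≤ S.card := by
    by_contra hlt
    push_neg at hlt
    interval_cases h : S.card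
    · rw [Finset.card_eq_zero.mp h] at hdim
      simp at hdim
      exact hdim (collinear_empty ℝ _)
    · obtain ⟨a, ha⟩ := Finset.card_eq_one.mp h
      rw [ha] at hdim
      apply hdim
      simp only [Finset.coe_singleton, Set.image_singleton]
      exact collinear_singleton ℝ _
    · obtain ⟨a, b, hab, hS⟩ := Finset.card_eq_two.mp h
      rw [hS] at hdim
      apply hdim
      simp only [Finset.coe_insert, Finset.coe_singleton, Set.image_insert_eq,
        Set.image_singleton]
      exact collinear_pair ℝ _ _
  -- nondegeneracy of any triangle with vertices in S
  have detne : ∀ x y z : ℤ × ℤ, x ∈ S → y ∈ S → z ∈ S → x ≠ y → x ≠ z → y ≠ z →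
      (y.1 - x.1) * (z.2 - x.2) - (y.2 - x.2) * (z.1 - x.1) ≠ 0 := by
    intro x y z hx hy hz hxy hxz hyz h0
    have hxK := hmemhull x hx
    have hyK := hmemhull y hy
    have hzK := hmemhull z hz
    rcases collinear_middle x y z hxy hxz hyz h0 with hm | hm | hm
    · obtain ⟨e1, _⟩ := (mem_extremePoints.mp (hext x hxK)).2 (toR2 y) hyK (toR2 z) hzK hm
      exact hxy (toR2_inj e1.symm)
    · obtain ⟨e1, _⟩ := (mem_extremePoints.mp (hext y hyK)).2 (toR2 x) hxK (toR2 z) hzK hm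
      exact hxy (toR2_inj e1)
    · obtain ⟨e1, _⟩ := (mem_extremePoints.mp (hext z hzK)).2 (toR2 x) hxK (toR2 y) hyK hm
      exact hxz (toR2_inj e1)
  -- triangles with vertices in S contain no other lattice points
  have hempty : ∀ x y z : ℤ × ℤ, x ∈ S → y ∈ S → z ∈ S →
      ∀ w : ℤ × ℤ, toR2 w ∈ convexHull ℝ ({toR2 x, toR2 y, toR2 z} : Set (ℝ × ℝ)) →
        w ∈ S ∧ toR2 w ∈ convexHull ℝ ({toR2 x, toR2 y, toR2 z} : Set (ℝ × ℝ)) := by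
    intro x y z hx hy hz w hw
    have hsub : ({toR2 x, toR2 y, toR2 z} : Set (ℝ × ℝ)) ⊆ toR2 '' ↑S := by
      intro t ht
      simp only [Set.mem_insert_iff, Set.mem_singleton_iff] at ht
      rcases ht with rfl | rfl | rfl
      · exact ⟨x, hx, rfl⟩
      · exact ⟨y, hy, rfl⟩
      · exact ⟨z, hz, rfl⟩
    exact ⟨hlat w (convexHull_mono hsub hw), hw⟩
  -- helper: a point of S distinct from three others is not in their triangle
  have hnotin : ∀ x a b c : ℤ × ℤ, x ∈ S → x ≠ a → x ≠ b → x ≠ c →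
      (toR2 '' ↑S : Set (ℝ × ℝ)) = {toR2 x, toR2 a, toR2 b, toR2 c} →
      toR2 x ∉ convexHull ℝ ({toR2 a, toR2 b, toR2 c} : Set (ℝ × ℝ)) := by
    intro x a b c hx hxa hxb hxc himg
    have hxe : toR2 x ∈
        (convexHull ℝ ({toR2 x, toR2 a, toR2 b, toR2 c} : Set (ℝ × ℝ))).extremePoints ℝ := by
      have h := hext x (hmemhull x hx)
      rw [show latticeHull S = convexHull ℝ ({toR2 x, toR2 a, toR2 b, toR2 c} : Set (ℝ × ℝ))
        from by rw [latticeHull, himg]] at h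
      exact h
    exact fourth_not_mem hxe (fun h => hxa (toR2_inj h)) (fun h => hxb (toR2_inj h))
      (fun h => hxc (toR2_inj h))
  have hc34 : S.card = 3 ∨ S.card = 4 := by omega
  rcases hc34 with h3 | h4
  · -- triangle case
    obtain ⟨p, q, r, hpq, hpr, hqr, hS⟩ := Finset.card_eq_three.mp h3
    have hp : p ∈ S := by rw [hS]; simp
    have hq : q ∈ S := by rw [hS]; simp
    have hr : r ∈ S := by rw [hS]; simp
    set E : ℤ := (r.1 - q.1) * (p.2 - q.2) - (r.2 - q.2) * (p.1 - q.1) with hEdef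
    have hEne : E ≠ 0 := detne q r p hq hr hp hqr hpq.symm hpr.symm
    have hemp3 : ∀ w : ℤ × ℤ,
        toR2 w ∈ convexHull ℝ ({toR2 q, toR2 r, toR2 p} : Set (ℝ × ℝ)) →
        w = q ∨ w = r ∨ w = p := by
      intro w hw
      obtain ⟨hwS, _⟩ := hempty q r p hq hr hp w hw
      rw [hS] at hwS
      simp only [Finset.mem_insert, Finset.mem_singleton] at hwS
      tauto
    have hE : E = 1 ∨ E = -1 := det_pm_one q r p hEne hemp3
    obtain ⟨A, b, hdet, hfq, hfr, hfp, _⟩ := map_triangle p q r E hEdef hE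
    refine ⟨A, b, by rw [hdet]; exact Int.isUnit_iff.mpr hE, Or.inl ?_⟩
    have himg : S.image (affineLatticeMap A b) = {(0, 0), (1, 0), (0, 1)} := by
      rw [hS, Finset.image_insert, Finset.image_insert, Finset.image_singleton,
        hfp, hfq, hfr]
      decide
    rw [himg]
  · -- quadrilateral case
    obtain ⟨p, T, hpT, hins, hT3⟩ := Finset.card_eq_succ.mp (by omega : S.card = 3 + 1)
    obtain ⟨q, r, s, hqr, hqs, hrs, hT⟩ := Finset.card_eq_three.mp hT3
    have hS : S = {p, q, r, s} := by rw [← hins, hT]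
    have hpq : p ≠ q := by rintro rfl; exact hpT (by rw [hT]; simp)
    have hpr : p ≠ r := by rintro rfl; exact hpT (by rw [hT]; simp)
    have hps : p ≠ s := by rintro rfl; exact hpT (by rw [hT]; simp)
    have hp : p ∈ S := by rw [hS]; simp
    have hq : q ∈ S := by rw [hS]; simp
    have hr : r ∈ S := by rw [hS]; simp
    have hs : s ∈ S := by rw [hS]; simp
    -- the four "not in opposite triangle" facts
    have hsetperm : ∀ x a b c : ℤ × ℤ, S = ({x, a, b, c} : Finset (ℤ × ℤ)) →
        (toR2 '' ↑S : Set (ℝ × ℝ)) = {toR2 x, toR2 a, toR2 b, toR2 c} := by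
      intro x a b c hEq
      rw [hEq]
      simp [Set.image_insert_eq]
    have hperm_s : S = ({s, q, r, p} : Finset (ℤ × ℤ)) := by
      rw [hS]; ext t; simp only [Finset.mem_insert, Finset.mem_singleton]; tauto
    have hperm_p : S = ({p, q, r, s} : Finset (ℤ × ℤ)) := hS
    have hperm_qp : S = ({q, p, r, s} : Finset (ℤ × ℤ)) := by
      rw [hS]; ext t; simp only [Finset.mem_insert, Finset.mem_singleton]; tauto
    have hperm_r : S = ({r, q, p, s} : Finset (ℤ × ℤ)) := by
      rw [hS]; ext t; simp only [Finset.mem_insert, Finset.mem_singleton]; tauto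
    have hperm_q : S = ({q, r, p, s} : Finset (ℤ × ℤ)) := by
      rw [hS]; ext t; simp only [Finset.mem_insert, Finset.mem_singleton]; tauto
    have hnot_s := hnotin s q r p hs hqs.symm hrs.symm hps.symm (hsetperm _ _ _ _ hperm_s)
    have hnot_p := hnotin p q r s hp hpq hpr hps (hsetperm _ _ _ _ hperm_p)
    have hnot_r := hnotin r q p s hr hqr.symm hpr.symm hrs (hsetperm _ _ _ _ hperm_r)
    have hnot_q := hnotin q r p s hq hqr hpq.symm hqs (hsetperm _ _ _ _ hperm_q)
    -- emptiness of the four triangles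
    have hemp_gen : ∀ x y z o : ℤ × ℤ, x ∈ S → y ∈ S → z ∈ S →
        (S = ({o, x, y, z} : Finset (ℤ × ℤ)) ∨ S = ({x, o, y, z} : Finset (ℤ × ℤ)) ∨
          S = ({x, y, o, z} : Finset (ℤ × ℤ)) ∨ S = ({x, y, z, o} : Finset (ℤ × ℤ))) →
        toR2 o ∉ convexHull ℝ ({toR2 x, toR2 y, toR2 z} : Set (ℝ × ℝ)) →
        ∀ w : ℤ × ℤ, toR2 w ∈ convexHull ℝ ({toR2 x, toR2 y, toR2 z} : Set (ℝ × ℝ)) →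
          w = x ∨ w = y ∨ w = z := by
      intro x y z o hx hy hz hperm hno w hw
      obtain ⟨hwS, _⟩ := hempty x y z hx hy hz w hw
      have hwmem : w = o ∨ w = x ∨ w = y ∨ w = z := by
        rcases hperm with hp' | hp' | hp' | hp' <;> rw [hp'] at hwS <;>
          simp only [Finset.mem_insert, Finset.mem_singleton] at hwS <;> tauto
      rcases hwmem with rfl | h | h | h
      · exact absurd hw hno
      · tauto
      · tauto
      · tauto
    have hemp_qrp : ∀ w : ℤ × ℤ,
        toR2 w ∈ convexHull ℝ ({toR2 q, toR2 r, toR2 p} : Set (ℝ × ℝ)) →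
        w = q ∨ w = r ∨ w = p :=
      hemp_gen q r p s hq hr hp (Or.inr (Or.inr (Or.inr hperm_q))) hnot_s
    have hemp_qps : ∀ w : ℤ × ℤ,
        toR2 w ∈ convexHull ℝ ({toR2 q, toR2 p, toR2 s} : Set (ℝ × ℝ)) →
        w = q ∨ w = p ∨ w = s :=
      hemp_gen q p s r hq hp hs (Or.inl hperm_r) hnot_r
    have hemp_qrs : ∀ w : ℤ × ℤ,
        toR2 w ∈ convexHull ℝ ({toR2 q, toR2 r, toR2 s} : Set (ℝ × ℝ)) →
        w = q ∨ w = r ∨ w = s :=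
      hemp_gen q r s p hq hr hs (Or.inr (Or.inl hperm_qp)) hnot_p
    have hemp_rps : ∀ w : ℤ × ℤ,
        toR2 w ∈ convexHull ℝ ({toR2 r, toR2 p, toR2 s} : Set (ℝ × ℝ)) →
        w = r ∨ w = p ∨ w = s :=
      hemp_gen r p s q hr hp hs (Or.inl hperm_q) hnot_q
    -- determinants
    set E : ℤ := (r.1 - q.1) * (p.2 - q.2) - (r.2 - q.2) * (p.1 - q.1) with hEdef
    have hEne : E ≠ 0 := detne q r p hq hr hp hqr hpq.symm hpr.symm
    have hE : E = 1 ∨ E = -1 := det_pm_one q r p hEne hemp_qrp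
    have hE2 : E * E = 1 := by rcases hE with h | h <;> rw [h] <;> norm_num
    have hD1 := det_pm_one q p s
      (detne q p s hq hp hs hpq.symm hqs hps) hemp_qps
    have hD2 := det_pm_one q r s
      (detne q r s hq hr hs hqr hqs hrs) hemp_qrs
    have hD3 := det_pm_one r p s
      (detne r p s hr hp hs hpr.symm hrs hps) hemp_rps
    set X : ℤ := (s.1 - q.1) * (p.2 - q.2) - (s.2 - q.2) * (p.1 - q.1) with hXdef
    set Y : ℤ := (s.2 - q.2) * (r.1 - q.1) - (s.1 - q.1) * (r.2 - q.2) with hYdef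
    have hX : X = 1 ∨ X = -1 := by
      have hXD : (p.1 - q.1) * (s.2 - q.2) - (p.2 - q.2) * (s.1 - q.1) = -X := by
        rw [hXdef]; ring
      rcases hD1 with h | h
      · right; linarith [hXD]
      · left; linarith [hXD]
    have hY : Y = 1 ∨ Y = -1 := by
      have hYD : (r.1 - q.1) * (s.2 - q.2) - (r.2 - q.2) * (s.1 - q.1) = Y := by
        rw [hYdef]; ring
      rcases hD2 with h | h
      · left; linarith [hYD]
      · right; linarith [hYD]
    have hid : 1 - E * X - E * Y =
        E * ((p.1 - r.1) * (s.2 - r.2) - (p.2 - r.2) * (s.1 - r.1)) := by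
      rw [hXdef, hYdef]
      linear_combination (-1 : ℤ) * hE2 + E * hEdef
    have hsumval : E * X + E * Y = 0 ∨ E * X + E * Y = 2 := by
      have hED3 : E * ((p.1 - r.1) * (s.2 - r.2) - (p.2 - r.2) * (s.1 - r.1)) = 1 ∨
          E * ((p.1 - r.1) * (s.2 - r.2) - (p.2 - r.2) * (s.1 - r.1)) = -1 := by
        rcases hE with h | h <;> rcases hD3 with h3 | h3 <;> rw [h, h3] <;> norm_num
      rcases hED3 with h | h
      · left; linarith [hid]
      · right; linarith [hid]
    have hEX : E * X = 1 ∨ E * X = -1 := by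
      rcases hE with h | h <;> rcases hX with h' | h' <;> rw [h, h'] <;> norm_num
    have hEY : E * Y = 1 ∨ E * Y = -1 := by
      rcases hE with h | h <;> rcases hY with h' | h' <;> rw [h, h'] <;> norm_num
    obtain ⟨A, b, hdet, hfq, hfr, hfp, hfgen⟩ := map_triangle p q r E hEdef hE
    have hfs : affineLatticeMap A b s = (E * X, E * Y) := by
      rw [hfgen s, hXdef, hYdef]
    rcases hEX with hA1 | hA1 <;> rcases hEY with hB1 | hB1
    · -- (1,1) : unit square directly
      rw [hA1, hB1] at hfs
      refine ⟨A, b, by rw [hdet]; exact Int.isUnit_iff.mpr hE, Or.inr ?_⟩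
      have himg : S.image (affineLatticeMap A b) = {(0, 0), (1, 0), (0, 1), (1, 1)} := by
        rw [hS, Finset.image_insert, Finset.image_insert, Finset.image_insert,
          Finset.image_singleton, hfp, hfq, hfr, hfs]
        decide
      rw [himg]
    · -- (1,-1) : shear (x,y) ↦ (x, x+y)
      rw [hA1, hB1] at hfs
      have hBval : ∀ u v : ℤ, affineLatticeMap !![1, 0; 1, 1] ((0 : ℤ), (0 : ℤ)) (u, v)
          = (u, u + v) := by
        intro u v
        simp [affineLatticeMap]
      have hBdet : (!![1, 0; 1, 1] : Matrix (Fin 2) (Fin 2) ℤ).det = 1 := by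
        rw [Matrix.det_fin_two_of]; norm_num
      refine ⟨!![1, 0; 1, 1] * A, affineLatticeMap !![1, 0; 1, 1] ((0 : ℤ), (0 : ℤ)) b,
        ?_, Or.inr ?_⟩
      · rw [Matrix.det_mul, hBdet, hdet, one_mul]
        exact Int.isUnit_iff.mpr hE
      · have hcomp : ∀ x : ℤ × ℤ,
            affineLatticeMap (!![1, 0; 1, 1] * A)
              (affineLatticeMap !![1, 0; 1, 1] ((0 : ℤ), (0 : ℤ)) b) x =
            affineLatticeMap !![1, 0; 1, 1] ((0 : ℤ), (0 : ℤ)) (affineLatticeMap A b x) :=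
          fun x => (affine_comp _ _ _ _ x).symm
        have himg : S.image (affineLatticeMap (!![1, 0; 1, 1] * A)
            (affineLatticeMap !![1, 0; 1, 1] ((0 : ℤ), (0 : ℤ)) b)) =
            {(0, 0), (1, 0), (0, 1), (1, 1)} := by
          rw [hS, Finset.image_insert, Finset.image_insert, Finset.image_insert,
            Finset.image_singleton, hcomp p, hcomp q, hcomp r, hcomp s,
            hfp, hfq, hfr, hfs, hBval, hBval, hBval, hBval]
          decide
        rw [himg]
    · -- (-1,1) : shear (x,y) ↦ (x+y, y)
      rw [hA1, hB1] at hfs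
      have hBval : ∀ u v : ℤ, affineLatticeMap !![1, 1; 0, 1] ((0 : ℤ), (0 : ℤ)) (u, v)
          = (u + v, v) := by
        intro u v
        simp [affineLatticeMap]
      have hBdet : (!![1, 1; 0, 1] : Matrix (Fin 2) (Fin 2) ℤ).det = 1 := by
        rw [Matrix.det_fin_two_of]; norm_num
      refine ⟨!![1, 1; 0, 1] * A, affineLatticeMap !![1, 1; 0, 1] ((0 : ℤ), (0 : ℤ)) b,
        ?_, Or.inr ?_⟩
      · rw [Matrix.det_mul, hBdet, hdet, one_mul]
        exact Int.isUnit_iff.mpr hE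
      · have hcomp : ∀ x : ℤ × ℤ,
            affineLatticeMap (!![1, 1; 0, 1] * A)
              (affineLatticeMap !![1, 1; 0, 1] ((0 : ℤ), (0 : ℤ)) b) x =
            affineLatticeMap !![1, 1; 0, 1] ((0 : ℤ), (0 : ℤ)) (affineLatticeMap A b x) :=
          fun x => (affine_comp _ _ _ _ x).symm
        have himg : S.image (affineLatticeMap (!![1, 1; 0, 1] * A)
            (affineLatticeMap !![1, 1; 0, 1] ((0 : ℤ), (0 : ℤ)) b)) =
            {(0, 0), (1, 0), (0, 1), (1, 1)} := by
          rw [hS, Finset.image_insert, Finset.image_insert, Finset.image_insert,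
            Finset.image_singleton, hcomp p, hcomp q, hcomp r, hcomp s,
            hfp, hfq, hfr, hfs, hBval, hBval, hBval, hBval]
          decide
        rw [himg]
    · -- (-1,-1) : impossible
      exfalso
      rcases hsumval with h | h <;> linarith
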